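/- Let f_n : [0,1] → ℝ, n ∈ ℕ, be continuous convex functions with f_n(t) ≤ 0 for all t ∈ [0,1] and f_n(1) = 0, and suppose f_n converges uniformly on [0,1] to a function f. Then for every r > 0, the suprema H_n := sup_{0 ≤ t < 1} (−t r − f_n(t))/(1−t) and H := sup_{0 ≤ t < 1} (−t r − f(t))/(1−t) are finite, and lim_{n→∞} H_n = H. -/

import Mathlib

open Filter Set

private lemma tail_small (h : ℝ → ℝ) (hc : ContinuousOn h (Set.Icc 0 1))
    (h1 : h 1 = 0) {ε : ℝ} (hε : 0 < ε) :
    ∃ t₀, t₀ ∈ Set.Ico (1/2 : ℝ) 1 ∧ ∀ t ∈ Set.Ico t₀ (1:ℝ), |h t| ≤ ε := by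
  have hmem : (1:ℝ) ∈ Set.Icc (0:ℝ) 1 := by norm_num
  have hcw : Filter.Tendsto h (nhdsWithin 1 (Set.Icc 0 1)) (nhds 0) := by
    have := hc 1 hmem
    rwa [ContinuousWithinAt, h1] at this
  have hpre : h ⁻¹' Metric.closedBall 0 ε ∈ nhdsWithin 1 (Set.Icc 0 1) :=
    hcw (Metric.closedBall_mem_nhds 0 hε)
  rw [Metric.mem_nhdsWithin_iff] at hpre
  obtain ⟨δ, hδ, hsub⟩ := hpre
  refine ⟨max (1/2) (1 - δ/2), ⟨le_max_left _ _, ?_⟩, ?_⟩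
  · exact max_lt (by norm_num) (by linarith)
  · intro t ht
    have h12 : (1/2 : ℝ) ≤ t := le_trans (le_max_left _ _) ht.1
    have hδ2 : 1 - δ/2 ≤ t := le_trans (le_max_right _ _) ht.1
    have htmem : t ∈ Metric.ball 1 δ ∩ Set.Icc 0 1 := by
      constructor
      · rw [Metric.mem_ball, Real.dist_eq, abs_of_nonpos (by linarith [ht.2])]
        linarith [ht.2]
      · exact ⟨by linarith, ht.2.le⟩
    have := hsub htmem
    rwa [Set.mem_preimage, Metric.mem_closedBall, Real.dist_eq, sub_zero] at this

private lemma phi_contOn (h : ℝ → ℝ) (hc : ContinuousOn h (Set.Icc 0 1)) (r : ℝ)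
    {t₀ : ℝ} (ht1 : t₀ < 1) :
    ContinuousOn (fun t => (-t * r - h t) / (1 - t)) (Set.Icc 0 t₀) := by
  apply ContinuousOn.div
  · exact ((continuous_neg.comp continuous_id).mul continuous_const).continuousOn.sub
      (hc.mono (Set.Icc_subset_Icc le_rfl ht1.le))
  · exact (continuous_const.sub continuous_id).continuousOn
  · intro t ht
    have : t < 1 := lt_of_le_of_lt ht.2 ht1
    intro hcon
    have : (1:ℝ) - t > 0 := by linarith
    linarith [hcon ▸ this]

private lemma bdd_aux (φ : ℝ → ℝ) {t₀ : ℝ} (h0 : 0 ≤ t₀) (h1 : t₀ < 1)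
    (hφ : ContinuousOn φ (Set.Icc 0 t₀))
    (htail : ∀ t ∈ Set.Ico t₀ (1:ℝ), φ t ≤ 0) :
    BddAbove (φ '' Set.Ico 0 1) := by
  obtain ⟨M, hM⟩ := (isCompact_Icc.image_of_continuousOn hφ).bddAbove
  refine ⟨max M 0, ?_⟩
  rintro y ⟨t, ht, rfl⟩
  by_cases hc : t ≤ t₀
  · exact le_max_of_le_left (hM ⟨t, ⟨ht.1, hc⟩, rfl⟩)
  · exact le_max_of_le_right (htail t ⟨le_of_not_ge hc, ht.2⟩)

private lemma sSup_eq_aux (φ : ℝ → ℝ) {t₀ : ℝ} (h0 : 0 ≤ t₀) (h1 : t₀ < 1)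
    (hφ0 : 0 ≤ φ 0)
    (htail : ∀ t ∈ Set.Ico t₀ (1:ℝ), φ t ≤ 0)
    (hbdd : BddAbove (φ '' Set.Icc 0 t₀))
    (hbig : BddAbove (φ '' Set.Ico 0 1)) :
    sSup (φ '' Set.Ico 0 1) = sSup (φ '' Set.Icc 0 t₀) := by
  have hS : (0:ℝ) ∈ Set.Icc (0:ℝ) t₀ := ⟨le_rfl, h0⟩
  apply le_antisymm
  · refine csSup_le ⟨φ 0, 0, ⟨le_rfl, one_pos⟩, rfl⟩ ?_
    rintro y ⟨t, ht, rfl⟩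
    by_cases hc : t ≤ t₀
    · exact le_csSup hbdd ⟨t, ⟨ht.1, hc⟩, rfl⟩
    · calc φ t ≤ 0 := htail t ⟨le_of_not_ge hc, ht.2⟩
        _ ≤ φ 0 := hφ0
        _ ≤ _ := le_csSup hbdd ⟨0, hS, rfl⟩
  · exact csSup_le_csSup hbig ⟨φ 0, 0, hS, rfl⟩
      (Set.image_mono (fun t ht => ⟨ht.1, lt_of_le_of_lt ht.2 h1⟩))

private lemma sSup_diff_le (a b : ℝ → ℝ) (s : Set ℝ) (hs : s.Nonempty)
    (ha : BddAbove (a '' s)) (hb : BddAbove (b '' s)) {ε : ℝ}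
    (h : ∀ t ∈ s, |a t - b t| ≤ ε) :
    |sSup (a '' s) - sSup (b '' s)| ≤ ε := by
  rw [abs_sub_le_iff]
  constructor
  · rw [sub_le_iff_le_add]
    apply csSup_le (hs.image a)
    rintro y ⟨t, ht, rfl⟩
    have h2 : b t ≤ sSup (b '' s) := le_csSup hb ⟨t, ht, rfl⟩
    linarith [(abs_le.1 (h t ht)).2]
  · rw [sub_le_iff_le_add]
    apply csSup_le (hs.image b)
    rintro y ⟨t, ht, rfl⟩
    have h2 : a t ≤ sSup (a '' s) := le_csSup ha ⟨t, ht, rfl⟩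
    linarith [(abs_le.1 (h t ht)).1]

theorem hoeffding_sup_convergence (f : ℕ → ℝ → ℝ) (g : ℝ → ℝ)
    (hcont : ∀ n, ContinuousOn (f n) (Set.Icc 0 1))
    (hconv : ∀ n, ConvexOn ℝ (Set.Icc 0 1) (f n))
    (hle : ∀ n, ∀ t ∈ Set.Icc (0 : ℝ) 1, f n t ≤ 0)
    (h1 : ∀ n, f n 1 = 0)
    (hunif : TendstoUniformlyOn f g atTop (Set.Icc 0 1))
    (r : ℝ) (hr : 0 < r) :
    BddAbove ((fun t => (-t * r - g t) / (1 - t)) '' Set.Ico 0 1) ∧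
      (∀ n, BddAbove ((fun t => (-t * r - f n t) / (1 - t)) '' Set.Ico 0 1)) ∧
      Tendsto
        (fun n => sSup ((fun t => (-t * r - f n t) / (1 - t)) '' Set.Ico 0 1))
        atTop
        (nhds (sSup ((fun t => (-t * r - g t) / (1 - t)) '' Set.Ico 0 1))) := by
  have hgcont : ContinuousOn g (Set.Icc 0 1) :=
    hunif.continuousOn (Filter.Eventually.of_forall hcont).frequently
  have hg1 : g 1 = 0 := by
    have ht := hunif.tendsto_at (show (1:ℝ) ∈ Set.Icc (0:ℝ) 1 by norm_num)
    have ht' : Tendsto (fun _ : ℕ => (0:ℝ)) atTop (nhds (g 1)) := by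
      simpa [h1] using ht
    exact tendsto_nhds_unique ht' tendsto_const_nhds
  have hgle : ∀ t ∈ Set.Icc (0:ℝ) 1, g t ≤ 0 := fun t ht =>
    le_of_tendsto (hunif.tendsto_at ht) (Filter.Eventually.of_forall fun n => hle n t ht)
  -- tail nonpositivity criterion
  have key : ∀ (h : ℝ → ℝ) (t : ℝ), 1/2 ≤ t → t < 1 → -h t ≤ r/2 →
      (-t * r - h t) / (1 - t) ≤ 0 := by
    intro h t h12 ht1 hht
    apply div_nonpos_of_nonpos_of_nonneg
    · nlinarith
    · linarith
  -- Part 1 : boundedness for g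
  obtain ⟨t₀, ht₀, htg⟩ := tail_small g hgcont hg1 (half_pos hr)
  have ht₀0 : (0:ℝ) ≤ t₀ := le_trans (by norm_num) ht₀.1
  have tailg : ∀ t ∈ Set.Ico t₀ (1:ℝ), (-t * r - g t) / (1 - t) ≤ 0 := by
    intro t ht
    refine key g t (le_trans ht₀.1 ht.1) ht.2 ?_
    have := htg t ht
    have := neg_le_of_abs_le this
    linarith [abs_le.1 (htg t ht)]
  have part1 : BddAbove ((fun t => (-t * r - g t) / (1 - t)) '' Set.Ico 0 1) :=
    bdd_aux _ ht₀0 ht₀.2 (phi_contOn g hgcont r ht₀.2) tailg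
  -- Part 2 : boundedness for each f n
  have part2 : ∀ n, BddAbove ((fun t => (-t * r - f n t) / (1 - t)) '' Set.Ico 0 1) := by
    intro n
    obtain ⟨t₁, ht₁, htf⟩ := tail_small (f n) (hcont n) (h1 n) (half_pos hr)
    have ht₁0 : (0:ℝ) ≤ t₁ := le_trans (by norm_num) ht₁.1
    refine bdd_aux _ ht₁0 ht₁.2 (phi_contOn (f n) (hcont n) r ht₁.2) ?_
    intro t ht
    refine key (f n) t (le_trans ht₁.1 ht.1) ht.2 ?_
    linarith [abs_le.1 (htf t ht)]
  refine ⟨part1, part2, ?_⟩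
  -- Part 3 : convergence
  rw [Metric.tendsto_atTop]
  intro ε hε
  obtain ⟨t₁, ht₁, htg1⟩ := tail_small g hgcont hg1 (show (0:ℝ) < r/4 by linarith)
  have ht₁0 : (0:ℝ) ≤ t₁ := le_trans (by norm_num) ht₁.1
  have ht₁1 : t₁ < 1 := ht₁.2
  set δ := min (r/4) (ε/2 * (1 - t₁)) with hδdef
  have hδpos : 0 < δ := lt_min (by linarith) (by nlinarith)
  obtain ⟨N, hN⟩ := Filter.eventually_atTop.1
    ((Metric.tendstoUniformlyOn_iff.1 hunif) δ hδpos)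
  refine ⟨N, fun n hn => ?_⟩
  have hNn : ∀ x ∈ Set.Icc (0:ℝ) 1, dist (g x) (f n x) < δ := hN n hn
  -- the two sups restrict to [0, t₁]
  have hIccsub : Set.Icc (0:ℝ) t₁ ⊆ Set.Icc (0:ℝ) 1 :=
    Set.Icc_subset_Icc le_rfl ht₁1.le
  have tailψ : ∀ t ∈ Set.Ico t₁ (1:ℝ), (-t * r - g t) / (1 - t) ≤ 0 := by
    intro t ht
    refine key g t (le_trans ht₁.1 ht.1) ht.2 ?_
    linarith [abs_le.1 (htg1 t ht)]
  have tailφ : ∀ t ∈ Set.Ico t₁ (1:ℝ), (-t * r - f n t) / (1 - t) ≤ 0 := by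
    intro t ht
    refine key (f n) t (le_trans ht₁.1 ht.1) ht.2 ?_
    have htI : t ∈ Set.Icc (0:ℝ) 1 := ⟨le_trans ht₁0 ht.1, ht.2.le⟩
    have hd := hNn t htI
    rw [Real.dist_eq] at hd
    have h1' := abs_le.1 (htg1 t ht)
    have h2' := abs_lt.1 hd
    have hδle : δ ≤ r/4 := min_le_left _ _
    linarith
  have hψ0 : 0 ≤ (-(0:ℝ) * r - g 0) / (1 - 0) := by
    have := hgle 0 (by norm_num)
    simp
    linarith
  have hφ0 : 0 ≤ (-(0:ℝ) * r - f n 0) / (1 - 0) := by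
    have := hle n 0 (by norm_num)
    simp
    linarith
  have hbψ : BddAbove ((fun t => (-t * r - g t) / (1 - t)) '' Set.Icc 0 t₁) :=
    (isCompact_Icc.image_of_continuousOn (phi_contOn g hgcont r ht₁1)).bddAbove
  have hbφ : BddAbove ((fun t => (-t * r - f n t) / (1 - t)) '' Set.Icc 0 t₁) :=
    (isCompact_Icc.image_of_continuousOn (phi_contOn (f n) (hcont n) r ht₁1)).bddAbove
  have eqψ := sSup_eq_aux (fun t => (-t * r - g t) / (1 - t)) ht₁0 ht₁1 hψ0 tailψ hbψ part1
  have eqφ := sSup_eq_aux (fun t => (-t * r - f n t) / (1 - t)) ht₁0 ht₁1 hφ0 tailφ hbφ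
    (part2 n)
  rw [Real.dist_eq, eqψ, eqφ]
  have hdiff : ∀ t ∈ Set.Icc (0:ℝ) t₁,
      |(-t * r - f n t) / (1 - t) - (-t * r - g t) / (1 - t)| ≤ ε/2 := by
    intro t ht
    have ht1 : t < 1 := lt_of_le_of_lt ht.2 ht₁1
    have hpos : (0:ℝ) < 1 - t := by linarith
    rw [div_sub_div_same]
    have hnum : (-t * r - f n t) - (-t * r - g t) = g t - f n t := by ring
    rw [hnum, abs_div, abs_of_pos hpos, div_le_iff₀ hpos]
    have hd := hNn t (hIccsub ht)
    rw [Real.dist_eq] at hd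
    have hδle : δ ≤ ε/2 * (1 - t₁) := min_le_right _ _
    have : |g t - f n t| ≤ ε/2 * (1 - t₁) := le_trans hd.le hδle
    nlinarith [abs_nonneg (g t - f n t), ht.2, hε]
  have := sSup_diff_le _ _ (Set.Icc 0 t₁) ⟨0, le_rfl, ht₁0⟩ hbφ hbψ hdiff
  linarith [abs_le.1 this, hε]
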